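/- An edge e of the assignment game is tight (u_i + v_j = w_{ij}) under every core imputation if and only if e belongs to some maximum weight matching (i.e., e is viable or essential). -/

import Mathlib

open scoped Classical

/-- `M` is a matching in the bipartite graph with edge set `E`. -/
def IsMatching {U V : Type*} (E M : Finset (U × V)) : Prop :=
  M ⊆ E ∧ (∀ e ∈ M, ∀ e' ∈ M, e.1 = e'.1 → e = e') ∧
    (∀ e ∈ M, ∀ e' ∈ M, e.2 = e'.2 → e = e')

/-- Total weight of a set of edges. -/
def matchWeight {U V : Type*} (w : U × V → ℚ) (M : Finset (U × V)) : ℚ :=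
  ∑ e ∈ M, w e

/-- Maximum weight of a matching in `(E, w)`. -/
noncomputable def maxWeight {U V : Type*} [DecidableEq U] [DecidableEq V]
    (E : Finset (U × V)) (w : U × V → ℚ) : ℚ :=
  ((E.powerset).filter (fun M => IsMatching E M)).sup'
    ⟨∅, by simp [IsMatching]⟩ (matchWeight w)

/-- `M` is a maximum weight matching. -/
def IsMaxMatching {U V : Type*} [DecidableEq U] [DecidableEq V]
    (E : Finset (U × V)) (w : U × V → ℚ) (M : Finset (U × V)) : Prop :=
  IsMatching E M ∧ matchWeight w M = maxWeight E w

/-- Core imputations of the assignment game (Shapley–Shubik characterization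
as optimal dual solutions). -/
def InCore {U V : Type*} [Fintype U] [Fintype V] [DecidableEq U] [DecidableEq V]
    (E : Finset (U × V)) (w : U × V → ℚ) (u : U → ℚ) (v : V → ℚ) : Prop :=
  (∀ i, 0 ≤ u i) ∧ (∀ j, 0 ≤ v j) ∧ (∀ e ∈ E, w e ≤ u e.1 + v e.2) ∧
    (∑ i, u i) + (∑ j, v j) = maxWeight E w

/-- A vertex (from either side) is matched in `M`. -/
def MatchedIn {U V : Type*} (M : Finset (U × V)) : U ⊕ V → Prop
  | Sum.inl i => ∃ j, (i, j) ∈ M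
  | Sum.inr j => ∃ i, (i, j) ∈ M

/-- A vertex is essential if it is matched in every maximum weight matching. -/
def EssentialVertex {U V : Type*} [DecidableEq U] [DecidableEq V]
    (E : Finset (U × V)) (w : U × V → ℚ) (q : U ⊕ V) : Prop :=
  ∀ M, IsMaxMatching E w M → MatchedIn M q

lemma square_duality {X : Type*} [Fintype X] [DecidableEq X] (W : X → X → ℤ) :
    ∃ (u v : X → ℤ) (σ : Equiv.Perm X),
      (∀ i j, W i j ≤ u i + v j) ∧ (∑ i, u i) + (∑ j, v j) = ∑ i, W i (σ i) := by
  set B : ℤ := ∑ i, ∑ j, |W i j| with hB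
  have hWB : ∀ i j, |W i j| ≤ B := by
    intro i j
    calc |W i j| ≤ ∑ j', |W i j'| :=
          Finset.single_le_sum (f := fun j' => |W i j'|) (fun k _ => abs_nonneg _)
            (Finset.mem_univ j)
      _ ≤ B := Finset.single_le_sum (f := fun i' => ∑ j', |W i' j'|)
          (fun k _ => Finset.sum_nonneg fun _ _ => abs_nonneg _) (Finset.mem_univ i)
  set P : ℤ → Prop := fun s => ∃ u v : X → ℤ,
    (∀ i j, W i j ≤ u i + v j) ∧ (∑ i, u i) + (∑ j, v j) = s with hP
  have hbdd : ∃ b : ℤ, ∀ z, P z → b ≤ z := by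
    refine ⟨-((Fintype.card X : ℤ) * B), ?_⟩
    rintro z ⟨u, v, hfeas, hsum⟩
    have : ∑ _i : X, (-B) ≤ ∑ i : X, (u i + v i) := by
      apply Finset.sum_le_sum
      intro i _
      have h1 := hfeas i i
      have h2 := hWB i i
      have := neg_abs_le (W i i)
      omega
    simp only [Finset.sum_add_distrib] at this
    rw [Finset.sum_const, Finset.card_univ, smul_neg, nsmul_eq_mul] at this
    omega
  have hinh : ∃ z, P z := by
    refine ⟨(Fintype.card X : ℤ) * B, fun _ => B, fun _ => 0, fun i j => ?_, by simp⟩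
    show W i j ≤ B + 0
    have h2 := hWB i j
    have := le_abs_self (W i j)
    omega
  obtain ⟨lb, ⟨u, v, hfeas, hsum⟩, hmin⟩ := Int.exists_least_of_bdd hbdd hinh
  set N : X → Finset X := fun i => Finset.univ.filter (fun j => u i + v j = W i j) with hN
  by_cases hall : ∀ s : Finset X, s.card ≤ (s.biUnion N).card
  · obtain ⟨f, hfinj, hfmem⟩ := (Finset.all_card_le_biUnion_card_iff_exists_injective N).mp hall
    have hfbij : Function.Bijective f := Finite.injective_iff_bijective.mp hfinj
    refine ⟨u, v, Equiv.ofBijective f hfbij, hfeas, ?_⟩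
    have htight : ∀ i, u i + v (f i) = W i (f i) := by
      intro i
      have := hfmem i
      simp only [hN, Finset.mem_filter] at this
      exact this.2
    calc (∑ i, u i) + (∑ j, v j) = (∑ i, u i) + (∑ i, v (f i)) := by
          rw [Function.Bijective.sum_comp hfbij v]
      _ = ∑ i, (u i + v (f i)) := by rw [Finset.sum_add_distrib]
      _ = ∑ i, W i (f i) := by
          apply Finset.sum_congr rfl; intro i _; exact htight i
  · push_neg at hall
    obtain ⟨s, hs⟩ := hall
    exfalso
    set u' : X → ℤ := fun i => u i - (if i ∈ s then 1 else 0) with hu'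
    set v' : X → ℤ := fun j => v j + (if j ∈ s.biUnion N then 1 else 0) with hv'
    have hfeas' : ∀ i j, W i j ≤ u' i + v' j := by
      intro i j
      simp only [hu', hv']
      by_cases hi : i ∈ s
      · by_cases hj : j ∈ s.biUnion N
        · have := hfeas i j; simp [hi, hj]; omega
        · have hjN : j ∉ N i := fun h => hj (Finset.mem_biUnion.mpr ⟨i, hi, h⟩)
          simp only [hN, Finset.mem_filter, Finset.mem_univ, true_and] at hjN
          have := hfeas i j
          simp [hi, hj]
          omega
      · have := hfeas i j
        simp only [hi, if_false]
        split <;> omega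
    have hsum' : (∑ i, u' i) + (∑ j, v' j)
        = lb - (s.card : ℤ) + ((s.biUnion N).card : ℤ) := by
      have h1 : ∑ i, u' i = (∑ i, u i) - (s.card : ℤ) := by
        simp only [hu', Finset.sum_sub_distrib]
        congr 1
        rw [Finset.sum_ite_mem, Finset.univ_inter, Finset.sum_const]
        simp
      have h2 : ∑ j, v' j = (∑ j, v j) + ((s.biUnion N).card : ℤ) := by
        simp only [hv', Finset.sum_add_distrib]
        congr 1
        rw [Finset.sum_ite_mem, Finset.univ_inter, Finset.sum_const]
        simp
      omega
    have := hmin _ ⟨u', v', hfeas', hsum'⟩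
    have hcard : ((s.biUnion N).card : ℤ) < (s.card : ℤ) := by exact_mod_cast hs
    omega

section Helpers

set_option linter.unusedSectionVars false

variable {U V : Type*} [Fintype U] [Fintype V] [DecidableEq U] [DecidableEq V]

lemma matching_mem_filter (E M : Finset (U × V)) (hM : IsMatching E M) :
    M ∈ (E.powerset).filter (fun M => IsMatching E M) := by
  simp only [Finset.mem_filter, Finset.mem_powerset]
  exact ⟨hM.1, hM⟩

lemma matchWeight_le_maxWeight (E : Finset (U × V)) (w : U × V → ℚ) (M : Finset (U × V))
    (hM : IsMatching E M) : matchWeight w M ≤ maxWeight E w :=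
  Finset.le_sup' (matchWeight w) (matching_mem_filter E M hM)

lemma exists_max_matching (E : Finset (U × V)) (w : U × V → ℚ) :
    ∃ M, IsMaxMatching E w M := by
  obtain ⟨M, hMmem, hMeq⟩ := Finset.exists_mem_eq_sup'
    (⟨∅, by simp [IsMatching]⟩ : ((E.powerset).filter (fun M => IsMatching E M)).Nonempty)
    (matchWeight w)
  simp only [Finset.mem_filter, Finset.mem_powerset] at hMmem
  exact ⟨M, hMmem.2, hMeq.symm⟩

lemma sum_fst_le (M : Finset (U × V)) (u : U → ℚ) (hu : ∀ i, 0 ≤ u i)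
    (hinj : ∀ e ∈ M, ∀ e' ∈ M, e.1 = e'.1 → e = e') :
    ∑ e ∈ M, u e.1 ≤ ∑ i, u i := by
  have himg := Finset.sum_image (s := M) (f := u) (g := (Prod.fst : U × V → U)) hinj
  rw [← himg]
  exact Finset.sum_le_sum_of_subset_of_nonneg (Finset.subset_univ _)
    (fun i _ _ => hu i)

lemma sum_snd_le (M : Finset (U × V)) (v : V → ℚ) (hv : ∀ j, 0 ≤ v j)
    (hinj : ∀ e ∈ M, ∀ e' ∈ M, e.2 = e'.2 → e = e') :
    ∑ e ∈ M, v e.2 ≤ ∑ j, v j := by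
  have himg := Finset.sum_image (s := M) (f := v) (g := (Prod.snd : U × V → V)) hinj
  rw [← himg]
  exact Finset.sum_le_sum_of_subset_of_nonneg (Finset.subset_univ _)
    (fun j _ _ => hv j)

/-- Weak duality: any feasible nonnegative dual bounds the weight of any matching. -/
lemma weak_duality (E : Finset (U × V)) (w : U × V → ℚ) (u : U → ℚ) (v : V → ℚ)
    (hu : ∀ i, 0 ≤ u i) (hv : ∀ j, 0 ≤ v j)
    (hfeas : ∀ e ∈ E, w e ≤ u e.1 + v e.2)
    (M : Finset (U × V)) (hM : IsMatching E M) :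
    matchWeight w M ≤ (∑ i, u i) + (∑ j, v j) := by
  have h1 : matchWeight w M ≤ ∑ e ∈ M, (u e.1 + v e.2) :=
    Finset.sum_le_sum (fun e he => hfeas e (hM.1 he))
  have h2 : ∑ e ∈ M, (u e.1 + v e.2) = (∑ e ∈ M, u e.1) + (∑ e ∈ M, v e.2) :=
    Finset.sum_add_distrib
  have h3 := sum_fst_le M u hu hM.2.1
  have h4 := sum_snd_le M v hv hM.2.2
  linarith

end Helpers

set_option maxHeartbeats 1000000 in
lemma core_nonempty {U V : Type*} [Fintype U] [Fintype V] [DecidableEq U] [DecidableEq V]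
    (E : Finset (U × V)) (w : U × V → ℚ) (hw : ∀ e ∈ E, 0 < w e) :
    ∃ u v, InCore E w u v := by
  classical
  set N : ℕ := ∏ e ∈ E, (w e).den with hN
  have hNpos : 0 < N := Finset.prod_pos (fun e _ => Nat.pos_of_ne_zero (Rat.den_ne_zero _))
  have hNQ : (0:ℚ) < (N:ℚ) := by exact_mod_cast hNpos
  have hNne : (N:ℚ) ≠ 0 := ne_of_gt hNQ
  have hint : ∀ e ∈ E, ∃ z : ℤ, (z : ℚ) = (N:ℚ) * w e := by
    intro e he
    obtain ⟨k, hk⟩ := Finset.dvd_prod_of_mem (fun e => (w e).den) he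
    refine ⟨(w e).num * (k:ℤ), ?_⟩
    have hkQ : (N:ℚ) = ((w e).den : ℚ) * (k:ℚ) := by rw [hN, hk]; push_cast; ring
    rw [hkQ]
    push_cast
    rw [← Rat.den_mul_eq_num (w e)]
    ring
  set Wz : U × V → ℤ := fun e => if h : e ∈ E then (hint e h).choose else 0 with hWzdef
  have hWzE : ∀ e ∈ E, ((Wz e : ℤ) : ℚ) = (N:ℚ) * w e := by
    intro e he
    simp only [hWzdef, dif_pos he]
    exact (hint e he).choose_spec
  have hWz0 : ∀ e, 0 ≤ Wz e := by
    intro e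
    by_cases he : e ∈ E
    · have h : (0:ℚ) ≤ ((Wz e : ℤ) : ℚ) := by
        rw [hWzE e he]; exact mul_nonneg (le_of_lt hNQ) (le_of_lt (hw e he))
      exact_mod_cast h
    · simp [hWzdef, he]
  set W' : (U ⊕ V) → (U ⊕ V) → ℤ := fun a b =>
    match a, b with
    | Sum.inl i, Sum.inr j => Wz (i, j)
    | _, _ => 0
    with hW'def
  have hW'0 : ∀ a b, 0 ≤ W' a b := by
    rintro (i | j) (i' | j') <;> first | exact le_refl 0 | exact hWz0 _
  obtain ⟨u', v', σ, hfeas', hsq⟩ := square_duality W'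
  -- shift to a nonnegative dual
  obtain ⟨u2, v2, hfeas2, hu2, hv2, hsum2⟩ :
      ∃ u2 v2 : (U ⊕ V) → ℤ, (∀ a b, W' a b ≤ u2 a + v2 b) ∧ (∀ a, 0 ≤ u2 a) ∧
        (∀ b, 0 ≤ v2 b) ∧ (∑ a, u2 a) + (∑ b, v2 b) = (∑ a, u' a) + (∑ b, v' b) := by
    rcases isEmpty_or_nonempty (U ⊕ V) with h | h
    · exact ⟨u', v', hfeas', fun a => h.elim a, fun b => h.elim b, rfl⟩
    · have hne : (Finset.univ : Finset (U ⊕ V)).Nonempty := Finset.univ_nonempty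
      set c : ℤ := Finset.univ.inf' hne v' with hc
      obtain ⟨b0, _, hb0⟩ := Finset.exists_mem_eq_inf' hne v'
      refine ⟨fun a => u' a + c, fun b => v' b - c, ?_, ?_, ?_, ?_⟩
      · intro a b
        show W' a b ≤ (u' a + c) + (v' b - c)
        have := hfeas' a b; omega
      · intro a
        show 0 ≤ u' a + c
        have h1 := hfeas' a b0
        have h2 := hW'0 a b0
        omega
      · intro b
        show 0 ≤ v' b - c
        have : c ≤ v' b := Finset.inf'_le v' (Finset.mem_univ b)
        omega
      · show (∑ a, (u' a + c)) + (∑ b, (v' b - c)) = _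
        simp only [Finset.sum_add_distrib, Finset.sum_sub_distrib, Finset.sum_const,
          nsmul_eq_mul]
        ring
  -- the matching induced by σ
  set M : Finset (U × V) := E.filter (fun e => σ (Sum.inl e.1) = Sum.inr e.2) with hMdef
  have hMmatch : IsMatching E M := by
    refine ⟨Finset.filter_subset _ _, ?_, ?_⟩
    · intro a ha b hb hab
      rw [hMdef, Finset.mem_filter] at ha hb
      have h1 := ha.2
      have h2 := hb.2
      rw [hab] at h1
      rw [h2] at h1
      have : b.2 = a.2 := by exact Sum.inr.inj h1
      exact Prod.ext hab this.symm
    · intro a ha b hb hab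
      rw [hMdef, Finset.mem_filter] at ha hb
      have h1 := ha.2
      have h2 := hb.2
      rw [hab, ← h2] at h1
      have := σ.injective h1
      have hfst : a.1 = b.1 := Sum.inl.inj this
      exact Prod.ext hfst hab
  have hzero : ∀ j : V, W' (Sum.inr j) (σ (Sum.inr j)) = 0 := by
    intro j; rcases σ (Sum.inr j) with i | j' <;> rfl
  have hkey : ∀ e' ∈ M, W' (Sum.inl e'.1) (σ (Sum.inl e'.1)) = Wz e' := by
    intro e' he'
    rw [hMdef, Finset.mem_filter] at he'
    rw [he'.2]
  have hDM : (∑ a, W' a (σ a)) = ∑ e' ∈ M, Wz e' := by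
    rw [Fintype.sum_sum_type]
    have h2 : ∑ j : V, W' (Sum.inr j) (σ (Sum.inr j)) = 0 :=
      Finset.sum_eq_zero (fun j _ => hzero j)
    rw [h2, add_zero]
    have himg : ∑ e' ∈ M, Wz e'
        = ∑ i ∈ M.image (Prod.fst), W' (Sum.inl i) (σ (Sum.inl i)) := by
      rw [Finset.sum_image (s := M) (f := fun i => W' (Sum.inl i) (σ (Sum.inl i)))
        (g := (Prod.fst : U × V → U)) hMmatch.2.1]
      exact (Finset.sum_congr rfl (fun e' he' => (hkey e' he').symm))
    rw [himg]
    symm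
    apply Finset.sum_subset (Finset.subset_univ _)
    intro i _ hi
    rcases hσi : σ (Sum.inl i) with i' | j
    · rfl
    · by_cases hE : (i, j) ∈ E
      · exfalso
        apply hi
        refine Finset.mem_image.mpr ⟨(i, j), ?_, rfl⟩
        rw [hMdef, Finset.mem_filter]
        exact ⟨hE, hσi⟩
      · show Wz (i, j) = 0
        simp [hWzdef, hE]
  -- the rational dual
  set uq : U → ℚ := fun i => ((u2 (Sum.inl i) : ℤ) : ℚ) / N with huq
  set vq : V → ℚ := fun j => ((v2 (Sum.inr j) : ℤ) : ℚ) / N with hvq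
  have huq0 : ∀ i, 0 ≤ uq i := by
    intro i
    apply div_nonneg _ (le_of_lt hNQ)
    exact_mod_cast hu2 (Sum.inl i)
  have hvq0 : ∀ j, 0 ≤ vq j := by
    intro j
    apply div_nonneg _ (le_of_lt hNQ)
    exact_mod_cast hv2 (Sum.inr j)
  have hfeasQ : ∀ e' ∈ E, w e' ≤ uq e'.1 + vq e'.2 := by
    intro e' he'
    have h := hfeas2 (Sum.inl e'.1) (Sum.inr e'.2)
    have hred : W' (Sum.inl e'.1) (Sum.inr e'.2) = Wz e' := rfl
    rw [hred] at h
    have h' : ((Wz e' : ℤ) : ℚ) ≤ ((u2 (Sum.inl e'.1) : ℤ) : ℚ) + ((v2 (Sum.inr e'.2) : ℤ) : ℚ) := by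
      exact_mod_cast h
    rw [hWzE e' he'] at h'
    rw [huq, hvq]
    rw [← add_div, le_div_iff₀ hNQ]
    linarith
  -- total dual value equals max weight
  have hsumU : ∑ i, uq i = (∑ i : U, ((u2 (Sum.inl i) : ℤ) : ℚ)) / N := by
    rw [huq, Finset.sum_div]
  have hsumV : ∑ j, vq j = (∑ j : V, ((v2 (Sum.inr j) : ℤ) : ℚ)) / N := by
    rw [hvq, Finset.sum_div]
  have hABle : (∑ i : U, u2 (Sum.inl i)) + (∑ j : V, v2 (Sum.inr j))
      ≤ (∑ a, u2 a) + (∑ b, v2 b) := by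
    rw [Fintype.sum_sum_type (f := u2), Fintype.sum_sum_type (f := v2)]
    have h1 : (0:ℤ) ≤ ∑ j : V, u2 (Sum.inr j) :=
      Finset.sum_nonneg (fun j _ => hu2 _)
    have h2 : (0:ℤ) ≤ ∑ i : U, v2 (Sum.inl i) :=
      Finset.sum_nonneg (fun i _ => hv2 _)
    omega
  have hDint : (∑ a, u2 a) + (∑ b, v2 b) = ∑ e' ∈ M, Wz e' := by
    rw [hsum2, hsq, hDM]
  have hMw : ((∑ e' ∈ M, Wz e' : ℤ) : ℚ) = (N:ℚ) * matchWeight w M := by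
    push_cast
    rw [matchWeight, Finset.mul_sum]
    exact Finset.sum_congr rfl (fun e' he' => hWzE e' (hMmatch.1 he'))
  have hSle : (∑ i, uq i) + (∑ j, vq j) ≤ matchWeight w M := by
    rw [hsumU, hsumV, ← add_div, div_le_iff₀ hNQ]
    have : ((∑ i : U, u2 (Sum.inl i)) + (∑ j : V, v2 (Sum.inr j)) : ℚ)
        ≤ (((∑ e' ∈ M, Wz e' : ℤ)) : ℚ) := by
      exact_mod_cast le_of_le_of_eq hABle hDint
    have hMw' := hMw
    push_cast at this hMw' ⊢
    rw [mul_comm]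
    linarith [hMw', this]
  have hMle : matchWeight w M ≤ maxWeight E w := matchWeight_le_maxWeight E w M hMmatch
  have hge : maxWeight E w ≤ (∑ i, uq i) + (∑ j, vq j) := by
    rw [maxWeight]
    apply Finset.sup'_le
    intro M' hM'
    rw [Finset.mem_filter] at hM'
    exact weak_duality E w uq vq huq0 hvq0 hfeasQ M' hM'.2
  exact ⟨uq, vq, huq0, hvq0, hfeasQ, le_antisymm (by linarith) hge⟩

/-- An edge is tight under every core imputation iff it belongs to some maximum
weight matching (i.e. it is viable or essential). -/
theorem always_tight_iff_in_some_max_matching {U V : Type*} [Fintype U] [Fintype V]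
    [DecidableEq U] [DecidableEq V]
    (E : Finset (U × V)) (w : U × V → ℚ) (hw : ∀ e ∈ E, 0 < w e)
    (e : U × V) (he : e ∈ E) :
    (∀ (u : U → ℚ) (v : V → ℚ), InCore E w u v → u e.1 + v e.2 = w e) ↔
      (∃ M, IsMaxMatching E w M ∧ e ∈ M) := by
  constructor
  · intro htight
    by_contra hno
    push_neg at hno
    -- the best weight of a matching containing e
    set A : Finset (Finset (U × V)) :=
      (E.powerset).filter (fun M => IsMatching E M ∧ e ∈ M) with hA
    have hAne : A.Nonempty := by
      refine ⟨{e}, ?_⟩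
      rw [hA, Finset.mem_filter, Finset.mem_powerset]
      refine ⟨Finset.singleton_subset_iff.mpr he, ⟨Finset.singleton_subset_iff.mpr he, ?_, ?_⟩,
        Finset.mem_singleton_self e⟩
      · intro a ha b hb _
        rw [Finset.mem_singleton] at ha hb
        rw [ha, hb]
      · intro a ha b hb _
        rw [Finset.mem_singleton] at ha hb
        rw [ha, hb]
    set t : ℚ := A.sup' hAne (matchWeight w) with ht
    obtain ⟨MA, hMAmem, htEq⟩ := Finset.exists_mem_eq_sup' hAne (matchWeight w)
    rw [hA, Finset.mem_filter] at hMAmem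
    have htlt : t < maxWeight E w := by
      have hle : t ≤ maxWeight E w := by
        rw [ht, htEq]
        exact matchWeight_le_maxWeight E w MA hMAmem.2.1
      rcases lt_or_eq_of_le hle with h | h
      · exact h
      · exfalso
        exact hno MA ⟨hMAmem.2.1, by rw [← htEq, ← ht, h]⟩ hMAmem.2.2
    set ε : ℚ := maxWeight E w - t with hε
    have hεpos : 0 < ε := by rw [hε]; linarith
    set w' : U × V → ℚ := fun e' => w e' + if e' = e then ε else 0 with hw'def
    have hw'pos : ∀ e' ∈ E, 0 < w' e' := by
      intro e' he'
      have := hw e' he'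
      rw [hw'def]
      dsimp only
      split <;> linarith
    have hin : ∀ M : Finset (U × V), e ∈ M → matchWeight w' M = matchWeight w M + ε := by
      intro M heM
      rw [matchWeight, matchWeight, hw'def]
      rw [Finset.sum_add_distrib]
      congr 1
      rw [Finset.sum_ite_eq' M e (fun _ => ε), if_pos heM]
    have hout : ∀ M : Finset (U × V), e ∉ M → matchWeight w' M = matchWeight w M := by
      intro M heM
      rw [matchWeight, matchWeight, hw'def]
      apply Finset.sum_congr rfl
      intro e' he'
      have : e' ≠ e := fun h => heM (h ▸ he')
      simp [this]
    have hmax' : maxWeight E w' = maxWeight E w := by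
      apply le_antisymm
      · rw [maxWeight]
        apply Finset.sup'_le
        intro M hM
        rw [Finset.mem_filter, Finset.mem_powerset] at hM
        by_cases heM : e ∈ M
        · rw [hin M heM]
          have : matchWeight w M ≤ t :=
            Finset.le_sup' (matchWeight w)
              (by rw [hA, Finset.mem_filter, Finset.mem_powerset]; exact ⟨hM.1, hM.2, heM⟩)
          rw [hε]
          linarith
        · rw [hout M heM]
          exact matchWeight_le_maxWeight E w M hM.2
      · obtain ⟨Mx, hMx⟩ := exists_max_matching E w
        have heMx : e ∉ Mx := fun h => hno Mx hMx h
        have : matchWeight w' Mx = maxWeight E w := by rw [hout Mx heMx, hMx.2]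
        rw [← this]
        exact matchWeight_le_maxWeight E w' Mx hMx.1
    obtain ⟨u, v, hcore'⟩ := core_nonempty E w' hw'pos
    have hcore : InCore E w u v := by
      refine ⟨hcore'.1, hcore'.2.1, ?_, ?_⟩
      · intro e' he'
        have h1 := hcore'.2.2.1 e' he'
        have h2 : w e' ≤ w' e' := by
          rw [hw'def]; dsimp only; split <;> linarith
        linarith
      · rw [hcore'.2.2.2, hmax']
    have h1 := htight u v hcore
    have h2 := hcore'.2.2.1 e he
    have h3 : w' e = w e + ε := by rw [hw'def]; simp
    rw [h3] at h2
    linarith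
  · rintro ⟨M, hMmax, heM⟩ u v hcore
    obtain ⟨hu, hv, hfeas, hsum⟩ := hcore
    have h1 : ∑ e' ∈ M, (u e'.1 + v e'.2) ≤ (∑ i, u i) + (∑ j, v j) := by
      rw [Finset.sum_add_distrib]
      have h3 := sum_fst_le M u hu hMmax.1.2.1
      have h4 := sum_snd_le M v hv hMmax.1.2.2
      linarith
    have h2 : matchWeight w M ≤ ∑ e' ∈ M, (u e'.1 + v e'.2) :=
      Finset.sum_le_sum (fun e' he' => hfeas e' (hMmax.1.1 he'))
    have h3 : (∑ i, u i) + (∑ j, v j) = matchWeight w M := by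
      rw [hsum, hMmax.2]
    have hzero : ∑ e' ∈ M, ((u e'.1 + v e'.2) - w e') = 0 := by
      rw [Finset.sum_sub_distrib]
      rw [matchWeight] at h2 h3
      linarith
    have hterm := (Finset.sum_eq_zero_iff_of_nonneg
      (fun e' he' => by
        have := hfeas e' (hMmax.1.1 he')
        linarith : ∀ e' ∈ M, 0 ≤ (u e'.1 + v e'.2) - w e')).mp hzero
    have := hterm e heM
    linarith
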